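/- The map F: {0,1}^n → {0,1}^n defined by F(a_1 a_2 ⋯ a_n) = a_2 a_3 ⋯ a_n x, where x = 1 − a_1 if a_2 a_3 ⋯ a_n 1 is a necklace and x = a_1 otherwise, is a bijection. -/
import Mathlib


/-- A binary necklace: lexicographically less than or equal to all its rotations. -/
def IsNecklace (l : List Bool) : Prop :=
  ∀ r : ℕ, r < l.length → l ≤ l.rotate r

instance : DecidablePred IsNecklace := fun l =>
  decidable_of_iff (∀ r : ℕ, r < l.length → l ≤ l.rotate r) Iff.rfl

/-- The PCR3 feedback shift register: shift left and append `1 - a₁` if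
`a₂ ⋯ aₙ 1` is a necklace, and `a₁` otherwise. -/
def pcr3 (a : List Bool) : List Bool :=
  a.tail ++ [if IsNecklace (a.tail ++ [true]) then !a.headI else a.headI]

theorem pcr3_bijective (n : ℕ) (hn : 0 < n) :
    Set.BijOn pcr3 {l : List Bool | l.length = n} {l : List Bool | l.length = n} := by
  have hfin : {l : List Bool | l.length = n}.Finite := List.finite_length_eq Bool n
  have hmaps : Set.MapsTo pcr3 {l : List Bool | l.length = n} {l : List Bool | l.length = n} := by
    intro a ha
    simp only [Set.mem_setOf_eq] at ha ⊢
    simp [pcr3, List.length_tail, ha]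
    omega
  refine (hfin.injOn_iff_bijOn_of_mapsTo hmaps).mp ?_
  intro a ha b hb h
  simp only [Set.mem_setOf_eq] at ha hb
  have hane : a ≠ [] := by intro he; rw [he] at ha; simp at ha; omega
  have hbne : b ≠ [] := by intro he; rw [he] at hb; simp at hb; omega
  unfold pcr3 at h
  obtain ⟨ht, hx⟩ := List.append_inj' h (by simp)
  have hxy := List.cons.injEq _ _ _ _ ▸ hx
  simp only [List.cons.injEq, and_true] at hx
  rw [ht] at hx
  have hhead : a.headI = b.headI := by
    by_cases hc : IsNecklace (b.tail ++ [true]) <;> simp [hc] at hx <;> exact hx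
  cases a with
  | nil => exact absurd rfl hane
  | cons x xs =>
    cases b with
    | nil => exact absurd rfl hbne
    | cons y ys =>
      simp only [List.headI, List.tail_cons] at hhead ht
      rw [hhead, ht]
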